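/- Let G' be a finite group acting measurably on X, with the law of x being G'-invariant, and let A ⊆ X be measurable with P(x ∈ A) > 0. Define Z = (1/|G'|) Σ_{g ∈ G'} 1_{g⁻¹·A}(x) − P(x ∈ A). Then Var(Z) = [P(x∈A)(1 − P(x∈A)) + (|G'| − 1)(γ_{G'}(A) − P(x∈A)) P(x∈A)] / |G'|, where γ_{G'}(A) = (1/(|G'| − 1)) Σ_{g ≠ e} P(x ∈ A ∩ g·A)/P(x ∈ A). -/

import Mathlib

open MeasureTheory Pointwise ProbabilityTheory

/-- Variance of the group-averaged indicator:
`Z = (1/|G'|) ∑_g 1_{g⁻¹•A}(x) − P(x∈A)` has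
`Var(Z) = [p(1−p) + (|G'|−1)(γ−p)p] / |G'|` where `p = P(x∈A)` and `γ`
is the symmetry index of `A`. -/
theorem variance_group_averaged_indicator
    {G' : Type*} [Group G'] [Fintype G'] [DecidableEq G']
    (hcard : 1 < Fintype.card G')
    {X : Type*} [MeasurableSpace X] [MulAction G' X]
    (μ : Measure X) [IsProbabilityMeasure μ]
    (hsmul : ∀ g : G', Measurable (fun a : X => g • a))
    (hμ : ∀ g : G', μ.map (fun a : X => g • a) = μ)
    (A : Set X) (hA : MeasurableSet A) (hApos : 0 < (μ A).toReal) :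
    let n : ℝ := Fintype.card G'
    let p : ℝ := (μ A).toReal
    let γ : ℝ := (1 / (n - 1)) *
      ∑ g ∈ Finset.univ.filter (fun g : G' => g ≠ 1),
        (μ (A ∩ g • A)).toReal / p
    let Z : X → ℝ := fun a =>
      (1 / n) * ∑ g : G', (g⁻¹ • A).indicator (fun _ => (1 : ℝ)) a - p
    variance Z μ = (p * (1 - p) + (n - 1) * (γ - p) * p) / n := by
  intro n p γ Z
  -- basic facts
  have hn : (0:ℝ) < n := by
    have : (0:ℕ) < Fintype.card G' := Fintype.card_pos
    simp only [n]; exact_mod_cast this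
  have hn1 : n - 1 ≠ 0 := by
    have : (1:ℝ) < n := by simp only [n]; exact_mod_cast hcard
    linarith
  have hn0 : n ≠ 0 := ne_of_gt hn
  have hp : p ≠ 0 := ne_of_gt hApos
  -- smul sets as preimages
  have hpre : ∀ (g : G') (S : Set X), (fun a : X => g • a) ⁻¹' S = g⁻¹ • S := by
    intro g S; exact Set.preimage_smul g S
  have hmeas_smul : ∀ (g : G'), MeasurableSet (g • A) := by
    intro g
    have : g • A = (fun a : X => g⁻¹ • a) ⁻¹' A := by
      rw [hpre g⁻¹ A, inv_inv]
    rw [this]; exact (hsmul g⁻¹) hA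
  have hmeasI : ∀ g : G', MeasurableSet (g⁻¹ • A) := fun g => hmeas_smul g⁻¹
  have hμsmul : ∀ (g : G') (S : Set X), MeasurableSet S → μ (g⁻¹ • S) = μ S := by
    intro g S hS
    rw [← hpre g S, ← Measure.map_apply (hsmul g) hS, hμ g]
  have hμI : ∀ g : G', μ (g⁻¹ • A) = μ A := fun g => hμsmul g A hA
  -- pairwise measures
  have hmeasInter : ∀ g h : G', MeasurableSet (g⁻¹ • A ∩ h⁻¹ • A) :=
    fun g h => (hmeasI g).inter (hmeasI h)
  have hpair : ∀ g h : G', μ (g⁻¹ • A ∩ h⁻¹ • A) = μ (A ∩ (g * h⁻¹) • A) := by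
    intro g h
    have hset : g⁻¹ • (A ∩ (g * h⁻¹) • A) = g⁻¹ • A ∩ h⁻¹ • A := by
      rw [Set.smul_set_inter, ← mul_smul]
      congr 2
      group
    rw [← hset, hμsmul g _ (hA.inter (hmeas_smul (g * h⁻¹)))]
  -- the sum function
  set F : X → ℝ := fun a => ∑ g : G', (g⁻¹ • A).indicator (fun _ => (1 : ℝ)) a with hF
  have hint_ind : ∀ (S : Set X), MeasurableSet S →
      Integrable (S.indicator (fun _ => (1:ℝ))) μ :=
    fun S hS => (integrable_const (1:ℝ)).indicator hS
  have hFint : Integrable F μ :=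
    integrable_finset_sum _ (fun g _ => hint_ind _ (hmeasI g))
  have hintF : ∫ a, F a ∂μ = n * p := by
    rw [hF, integral_finset_sum _ (fun g _ => hint_ind _ (hmeasI g))]
    have : ∀ g : G', ∫ a, (g⁻¹ • A).indicator (fun _ => (1:ℝ)) a ∂μ = p := by
      intro g
      have := integral_indicator_one (μ := μ) (hmeasI g)
      rw [measureReal_def, hμI g] at this
      exact this
    simp [this, n, Finset.card_univ, mul_comm]
  -- F squared
  have hF2 : ∀ a, (F a)^2 = ∑ g : G', ∑ h : G',
      ((g⁻¹ • A ∩ h⁻¹ • A).indicator (fun _ => (1:ℝ)) a) := by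
    intro a
    rw [sq, hF, Finset.sum_mul_sum]
    refine Finset.sum_congr rfl fun g _ => Finset.sum_congr rfl fun h _ => ?_
    by_cases hg : a ∈ g⁻¹ • A <;> by_cases hh : a ∈ h⁻¹ • A <;>
      simp [Set.indicator_apply, hg, hh]
  have hF2int : Integrable (fun a => (F a)^2) μ := by
    have : (fun a => (F a)^2) = fun a => ∑ g : G', ∑ h : G',
        ((g⁻¹ • A ∩ h⁻¹ • A).indicator (fun _ => (1:ℝ)) a) := funext hF2
    rw [this]
    exact integrable_finset_sum _ (fun g _ =>
      integrable_finset_sum _ (fun h _ => hint_ind _ (hmeasInter g h)))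
  -- value of ∫ F²
  set S : ℝ := ∑ g ∈ Finset.univ.filter (fun g : G' => g ≠ 1), (μ (A ∩ g • A)).toReal
    with hSdef
  have hintF2 : ∫ a, (F a)^2 ∂μ = n * (p + S) := by
    have h1 : ∫ a, (F a)^2 ∂μ = ∑ g : G', ∑ h : G',
        (μ (g⁻¹ • A ∩ h⁻¹ • A)).toReal := by
      simp_rw [hF2]
      rw [integral_finset_sum _ (fun g _ =>
        integrable_finset_sum _ (fun h _ => hint_ind _ (hmeasInter g h)))]
      refine Finset.sum_congr rfl fun g _ => ?_
      rw [integral_finset_sum _ (fun h _ => hint_ind _ (hmeasInter g h))]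
      exact Finset.sum_congr rfl fun h _ => integral_indicator_one (hmeasInter g h)
    rw [h1]
    have h2 : ∀ g : G', ∑ h : G', (μ (g⁻¹ • A ∩ h⁻¹ • A)).toReal
        = ∑ k : G', (μ (A ∩ k • A)).toReal := by
      intro g
      refine Fintype.sum_equiv ((Equiv.inv G').trans (Equiv.mulLeft g)) _ _ fun h => ?_
      simp [hpair g h]
    simp_rw [h2]
    rw [Finset.sum_const, Finset.card_univ, nsmul_eq_mul]
    congr 1
    show ∑ k : G', (μ (A ∩ k • A)).toReal = (μ A).toReal +
      ∑ g ∈ Finset.univ.filter (fun g : G' => g ≠ 1), (μ (A ∩ g • A)).toReal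
    rw [Finset.filter_ne']
    have := (Finset.add_sum_erase Finset.univ
      (fun k : G' => (μ (A ∩ k • A)).toReal) (Finset.mem_univ 1)).symm
    rw [one_smul, Set.inter_self] at this
    exact this
  -- Memℒp
  have hmemF : MemLp F 2 μ :=
    memLp_finset_sum _ (fun g _ =>
      memLp_indicator_const 2 (hmeasI g) (1:ℝ) (Or.inr (measure_ne_top μ _)))
  have hmemZ : MemLp Z 2 μ := by
    have : Z = fun a => (1/n) * F a - p := rfl
    rw [this]
    exact ((hmemF.const_mul (1/n)).sub (memLp_const p))
  -- compute the integrals of Z and Z²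
  have hintZ : ∫ a, Z a ∂μ = 0 := by
    have : Z = fun a => (1/n) * F a - p := rfl
    rw [this, integral_sub (hFint.const_mul _) (integrable_const p),
      integral_const_mul, hintF, integral_const]
    simp [hn0]
  have hintZ2 : ∫ a, (Z a)^2 ∂μ = (1/n)^2 * (n * (p + S)) - 2 * p * ((1/n) * (n*p)) + p^2 := by
    have hZ2 : ∀ a, (Z a)^2 = (1/n)^2 * (F a)^2 - 2 * p * ((1/n) * F a) + p^2 := by
      intro a; simp only [Z]; ring
    simp_rw [hZ2]
    have i1 : Integrable (fun a => (1/n)^2 * F a^2) μ := hF2int.const_mul _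
    have i2 : Integrable (fun a => 2 * p * (1/n * F a)) μ := by
      exact (hFint.const_mul _).const_mul _
    have i12 : Integrable (fun a => (1/n)^2 * F a^2 - 2 * p * (1/n * F a)) μ := i1.sub i2
    rw [integral_add i12 (integrable_const _), integral_sub i1 i2,
      integral_const_mul, integral_const_mul, integral_const_mul, hintF2, hintF,
      integral_const]
    simp
  -- variance
  rw [variance_eq_sub hmemZ]
  have e1 : (μ[Z ^ 2] : ℝ) = ∫ a, (Z a)^2 ∂μ := by
    congr 1
  have e2 : (μ[Z] : ℝ) = ∫ a, Z a ∂μ := rfl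
  rw [e1, e2, hintZ, hintZ2]
  -- final algebra
  have hγ : γ = (1 / (n - 1)) * (S / p) := by
    simp only [γ, hSdef, ← Finset.sum_div]
  rw [hγ]
  field_simp
  ring
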